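/- arXiv:1501.06342 — 3 statements merged into one kernel-verified Lean document; each statement's English description precedes it below -/
import Mathlib

section
/- Let P be the transition matrix of an absorbing finite Markov chain with transient part Q (so the expected absorption time vector is τ = Σ_{n≥0} Qⁿ·1), and let Q̂ be the transient part of the loop-erased chain with τ̂ = Σ_{n≥0} Q̂ⁿ·1. Then for every transient state S, τ̂_S ≤ τ_S. -/
open Filter

private lemma aux_pow_entry_nonneg {T : Type*} [Fintype T] [DecidableEq T]
    (Q : Matrix T T ℝ) (h : ∀ s s', 0 ≤ Q s s') (n : ℕ) :
    ∀ s s', 0 ≤ (Q ^ n) s s' := by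
  induction n with
  | zero =>
    intro s s'
    rw [pow_zero, Matrix.one_apply]
    split <;> norm_num
  | succ n ih =>
    intro s s'
    rw [pow_succ, Matrix.mul_apply]
    exact Finset.sum_nonneg fun j _ => mul_nonneg (ih s j) (h j s')

/-- The expected absorption time of the loop-erased chain is bounded by that of
the original chain: if `Q` is the transient block of an absorbing Markov chain
(`Qⁿ → 0`), `Q̂` the transient block of the loop-erased chain, and
`τ = ∑_{n≥0} Qⁿ·1`, `τ̂ = ∑_{n≥0} Q̂ⁿ·1` the expected absorption times, then
`τ̂_S ≤ τ_S` for every transient state `S`. -/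
theorem loop_erasing_absorption_time_le
    {T : Type*} [Fintype T] [DecidableEq T]
    (Q Qhat : Matrix T T ℝ) (τ τhat : T → ℝ)
    (hnonneg : ∀ s s', 0 ≤ Q s s')
    (hrow : ∀ s, ∑ s', Q s s' ≤ 1)
    (hdiag : ∀ s, Q s s < 1)
    (hQn : Tendsto (fun n : ℕ => Q ^ n) atTop (nhds 0))
    (hQhat : ∀ s s', Qhat s s' = if s' = s then 0 else Q s s' / (1 - Q s s))
    (hτ : ∀ s, τ s = ∑' n : ℕ, ((Q ^ n).mulVec (fun _ => (1 : ℝ))) s)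
    (hτhat : ∀ s, τhat s = ∑' n : ℕ, ((Qhat ^ n).mulVec (fun _ => (1 : ℝ))) s) :
    ∀ s, τhat s ≤ τ s := by
  classical
  -- abbreviations
  set v : ℕ → T → ℝ := fun n => (Q ^ n).mulVec (fun _ => (1 : ℝ)) with hvdef
  set w : ℕ → T → ℝ := fun n => (Qhat ^ n).mulVec (fun _ => (1 : ℝ)) with hwdef
  have hQpow := aux_pow_entry_nonneg Q hnonneg
  -- basic facts about v
  have hvapp : ∀ n s, v n s = ∑ s', (Q ^ n) s s' * 1 := by
    intro n s; simp [hvdef, Matrix.mulVec, dotProduct]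
  have hv0 : ∀ s, v 0 s = 1 := by
    intro s; simp [hvdef, Matrix.one_mulVec]
  have hvnonneg : ∀ n s, 0 ≤ v n s := by
    intro n s
    rw [hvapp]
    exact Finset.sum_nonneg fun j _ => by simpa using hQpow n s j
  have hvsucc : ∀ n s, v (n + 1) s = ∑ s', Q s s' * v n s' := by
    intro n s
    have h1 : Q ^ (n + 1) = Q * Q ^ n := pow_succ' Q n
    simp only [hvdef, h1, ← Matrix.mulVec_mulVec]
    simp [Matrix.mulVec, dotProduct]
  have hvle1 : ∀ n s, v n s ≤ 1 := by
    intro n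
    induction n with
    | zero => intro s; rw [hv0]
    | succ n ih =>
      intro s
      rw [hvsucc]
      calc ∑ s', Q s s' * v n s' ≤ ∑ s', Q s s' * 1 := by
            exact Finset.sum_le_sum fun j _ =>
              mul_le_mul_of_nonneg_left (ih j) (hnonneg s j)
        _ ≤ 1 := by simpa using hrow s
  -- entrywise convergence of v to 0
  have hvtend : ∀ s, Tendsto (fun n => v n s) atTop (nhds 0) := by
    intro s
    have hent : ∀ s', Tendsto (fun n : ℕ => (Q ^ n) s s') atTop (nhds 0) := by
      intro s'
      have h1 := tendsto_pi_nhds.mp hQn s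
      have h2 := tendsto_pi_nhds.mp h1 s'
      simpa using h2
    have := tendsto_finset_sum (Finset.univ : Finset T)
      (fun s' _ => ((hent s').mul_const (1 : ℝ)))
    simp only [hvapp]
    simpa using this
  -- a half-life N
  obtain ⟨N, hNhalf, hN1⟩ :
      ∃ N : ℕ, (∀ s, v N s < 1 / 2) ∧ 1 ≤ N := by
    have h1 : ∀ᶠ n : ℕ in atTop, ∀ s, v n s < 1 / 2 :=
      eventually_all.2 fun s => (hvtend s).eventually_lt_const (by norm_num)
    rcases (h1.and (eventually_ge_atTop 1)).exists with ⟨N, h2, h3⟩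
    exact ⟨N, h2, h3⟩
  have hNpos : 0 < N := hN1
  -- decay
  have hdecay : ∀ n s, v (n + N) s ≤ 1 / 2 * v n s := by
    intro n s
    have h1 : v (n + N) s = ∑ s', (Q ^ n) s s' * v N s' := by
      simp only [hvdef, pow_add, ← Matrix.mulVec_mulVec]
      simp [Matrix.mulVec, dotProduct]
    rw [h1]
    calc ∑ s', (Q ^ n) s s' * v N s'
        ≤ ∑ s', (Q ^ n) s s' * (1 / 2) :=
          Finset.sum_le_sum fun j _ =>
            mul_le_mul_of_nonneg_left (hNhalf j).le (hQpow n s j)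
      _ = 1 / 2 * v n s := by
          rw [hvapp, Finset.mul_sum]
          exact Finset.sum_congr rfl fun j _ => by ring
  -- geometric bound
  have hkey : ∀ n s, v n s ≤ (1 / 2 : ℝ) ^ (n / N) := by
    intro n
    induction n using Nat.strong_induction_on with
    | _ n ih =>
      intro s
      rcases lt_or_ge n N with h | h
      · rw [Nat.div_eq_of_lt h, pow_zero]; exact hvle1 n s
      · have hlt : n - N < n := by omega
        calc v n s = v ((n - N) + N) s := by rw [Nat.sub_add_cancel h]
          _ ≤ 1 / 2 * v (n - N) s := hdecay _ s
          _ ≤ 1 / 2 * (1 / 2 : ℝ) ^ ((n - N) / N) := by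
              have := ih (n - N) hlt s
              linarith
          _ = (1 / 2 : ℝ) ^ ((n - N) / N + 1) := by rw [pow_succ]; ring
          _ = (1 / 2 : ℝ) ^ (n / N) := by rw [Nat.div_eq_sub_div hNpos h]
  -- summability of the geometric comparison sequence
  have hgeo : Summable (fun n : ℕ => (1 / 2 : ℝ) ^ (n / N)) := by
    have hblock : ∀ K : ℕ, ∑ i ∈ Finset.range (K * N), (1 / 2 : ℝ) ^ (i / N)
        = (∑ k ∈ Finset.range K, (1 / 2 : ℝ) ^ k) * N := by
      intro K
      induction K with
      | zero => simp
      | succ K ih =>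
        rw [Nat.succ_mul, Finset.sum_range_add, ih, Finset.sum_range_succ, add_mul]
        congr 1
        have hco : ∀ j ∈ Finset.range N,
            (1 / 2 : ℝ) ^ ((K * N + j) / N) = (1 / 2 : ℝ) ^ K := by
          intro j hj
          rw [Finset.mem_range] at hj
          congr 1
          rw [add_comm, Nat.add_mul_div_right _ _ hNpos, Nat.div_eq_of_lt hj, zero_add]
        rw [Finset.sum_congr rfl hco, Finset.sum_const, Finset.card_range,
          nsmul_eq_mul, mul_comm]
    apply summable_of_sum_range_le (c := 2 * (N : ℝ))
      (fun n => by positivity)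
    intro n
    have hsub : n ≤ (n / N + 1) * N := by
      have h2 := Nat.div_add_mod n N
      have h3 : n % N < N := Nat.mod_lt n hNpos
      rw [add_mul, one_mul]
      set A := n / N * N with hA
      rw [mul_comm] at h2
      omega
    calc ∑ i ∈ Finset.range n, (1 / 2 : ℝ) ^ (i / N)
        ≤ ∑ i ∈ Finset.range ((n / N + 1) * N), (1 / 2 : ℝ) ^ (i / N) :=
          Finset.sum_le_sum_of_subset_of_nonneg
            (Finset.range_subset_range.2 hsub) (fun i _ _ => by positivity)
      _ = (∑ k ∈ Finset.range (n / N + 1), (1 / 2 : ℝ) ^ k) * N := hblock _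
      _ ≤ 2 * (N : ℝ) := by
          have := sum_geometric_two_le (n / N + 1)
          have hNnn : (0 : ℝ) ≤ (N : ℝ) := Nat.cast_nonneg N
          nlinarith
  -- summability of v at each state
  have hsum : ∀ s, Summable (fun n => v n s) := fun s =>
    Summable.of_nonneg_of_le (fun n => hvnonneg n s) (fun n => hkey n s) hgeo
  -- τ is nonnegative and satisfies the fixed point equation
  have hτv : ∀ s, τ s = ∑' n, v n s := hτ
  have hτnonneg : ∀ s, 0 ≤ τ s := by
    intro s; rw [hτv s]; exact tsum_nonneg fun n => hvnonneg n s
  have hτeq : ∀ s, τ s = 1 + ∑ s', Q s s' * τ s' := by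
    intro s
    rw [hτv s, Summable.tsum_eq_zero_add (hsum s), hv0 s]
    congr 1
    calc ∑' n, v (n + 1) s = ∑' n, ∑ s', Q s s' * v n s' := by
          simp only [hvsucc]
      _ = ∑ s', ∑' n, Q s s' * v n s' :=
          Summable.tsum_finsetSum fun s' _ => (hsum s').mul_left _
      _ = ∑ s', Q s s' * τ s' := by
          refine Finset.sum_congr rfl fun s' _ => ?_
          rw [tsum_mul_left, hτv s']
  -- nonnegativity of Qhat
  have hQhatnn : ∀ s s', 0 ≤ Qhat s s' := by
    intro s s'
    rw [hQhat]
    split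
    · exact le_refl 0
    · exact div_nonneg (hnonneg s s') (by linarith [hdiag s])
  -- key fixed point inequality for τ against Qhat
  have hfix : ∀ s, 1 + ∑ s', Qhat s s' * τ s' ≤ τ s := by
    intro s
    have hpos : 0 < 1 - Q s s := by linarith [hdiag s]
    have hzero : Qhat s s * τ s = 0 := by rw [hQhat]; simp
    have e1 : ∑ s', Qhat s s' * τ s'
        = (∑ s' ∈ Finset.univ.erase s, Q s s' * τ s') / (1 - Q s s) := by
      rw [← Finset.sum_erase (f := fun s' => Qhat s s' * τ s') Finset.univ hzero, Finset.sum_div]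
      refine Finset.sum_congr rfl fun s' hs' => ?_
      rw [hQhat s s', if_neg (Finset.ne_of_mem_erase hs')]
      ring
    have e2 : Q s s * τ s + ∑ s' ∈ Finset.univ.erase s, Q s s' * τ s'
        = ∑ s', Q s s' * τ s' :=
      Finset.add_sum_erase Finset.univ (fun s' => Q s s' * τ s') (Finset.mem_univ s)
    have e3 : ∑ s' ∈ Finset.univ.erase s, Q s s' * τ s'
        = τ s - 1 - Q s s * τ s := by
      have := hτeq s
      linarith [e2]
    rw [e1, e3]
    have h2 : (τ s - 1 - Q s s * τ s) / (1 - Q s s) ≤ τ s - 1 := by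
      rw [div_le_iff₀ hpos]
      nlinarith [hnonneg s s, hτnonneg s]
    linarith
  -- facts about w
  have hQhpow := aux_pow_entry_nonneg Qhat hQhatnn
  have hw0 : ∀ s, w 0 s = 1 := by
    intro s; simp [hwdef, Matrix.one_mulVec]
  have hwnonneg : ∀ n s, 0 ≤ w n s := by
    intro n s
    have : w n s = ∑ s', (Qhat ^ n) s s' * 1 := by
      simp [hwdef, Matrix.mulVec, dotProduct]
    rw [this]
    exact Finset.sum_nonneg fun j _ => by simpa using hQhpow n s j
  have hwsucc : ∀ n s, w (n + 1) s = ∑ s', Qhat s s' * w n s' := by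
    intro n s
    have h1 : Qhat ^ (n + 1) = Qhat * Qhat ^ n := pow_succ' Qhat n
    simp only [hwdef, h1, ← Matrix.mulVec_mulVec]
    simp [Matrix.mulVec, dotProduct]
  -- the partial sums of w are bounded by τ
  have hmain : ∀ K s, ∑ n ∈ Finset.range K, w n s ≤ τ s := by
    intro K
    induction K with
    | zero => intro s; simpa using hτnonneg s
    | succ K ih =>
      intro s
      rw [Finset.sum_range_succ' _ K]
      have hshift : ∑ n ∈ Finset.range K, w (n + 1) s
          = ∑ s', Qhat s s' * ∑ n ∈ Finset.range K, w n s' := by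
        simp only [hwsucc]
        rw [Finset.sum_comm]
        simp [Finset.mul_sum]
      calc (∑ n ∈ Finset.range K, w (n + 1) s) + w 0 s
          = 1 + ∑ s', Qhat s s' * ∑ n ∈ Finset.range K, w n s' := by
            rw [hshift, hw0 s]; ring
        _ ≤ 1 + ∑ s', Qhat s s' * τ s' :=
            add_le_add (le_refl 1) (Finset.sum_le_sum fun s' _ =>
              mul_le_mul_of_nonneg_left (ih s') (hQhatnn s s'))
        _ ≤ τ s := hfix s
  -- conclude
  intro s
  rw [hτhat s]
  exact Real.tsum_le_of_sum_range_le (fun n => hwnonneg n s) (fun K => hmain K s)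
end

section
/- For the star graph Moran process, the fixation probabilities satisfy the two-term recurrences Φ_{i+1,1} − Φ_{i,1} = (m/r)(Φ_{i,1} − Φ_{i,0}) and Φ_{i,1} − Φ_{i,0} = (1/(rm))(Φ_{i,0} − Φ_{i−1,0}). -/
/-- Two-term recurrences for the star graph Moran process: the fixation
probabilities satisfy `Φ_{i+1,1} − Φ_{i,1} = (m/r)(Φ_{i,1} − Φ_{i,0})` and
`Φ_{i,1} − Φ_{i,0} = (1/(rm))(Φ_{i,0} − Φ_{i−1,0})`. -/
theorem star_two_term_recurrences
    (m : ℕ) (hm : 1 ≤ m) (r : ℝ) (hr : 0 < r)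
    (Φc Φn : ℕ → ℝ)
    (hΦn0 : Φn 0 = 0) (hΦcm : Φc m = 1)
    (hrec1 : ∀ i, i < m →
      Φc i = (r / (r * (i + 1) + (m : ℝ) - i)) * (((m : ℝ) - i) / m) * Φc (i + 1)
        + (((m : ℝ) - i) / (r * (i + 1) + (m : ℝ) - i)) * Φn i
        + (1 - (r / (r * (i + 1) + (m : ℝ) - i)) * (((m : ℝ) - i) / m)
             - (((m : ℝ) - i) / (r * (i + 1) + (m : ℝ) - i))) * Φc i)
    (hrec0 : ∀ i, 0 < i → i ≤ m →
      Φn i = (r * i / (r * i + (m : ℝ) + 1 - i)) * Φc i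
        + ((1 / (r * i + (m : ℝ) + 1 - i)) * ((i : ℝ) / m)) * Φn (i - 1)
        + (1 - (r * i / (r * i + (m : ℝ) + 1 - i))
             - ((1 / (r * i + (m : ℝ) + 1 - i)) * ((i : ℝ) / m))) * Φn i) :
    (∀ i, i < m → Φc (i + 1) - Φc i = ((m : ℝ) / r) * (Φc i - Φn i)) ∧
    (∀ i, 0 < i → i ≤ m →
      Φc i - Φn i = (1 / (r * m)) * (Φn i - Φn (i - 1))) := by
  have hm' : (0 : ℝ) < m := by exact_mod_cast hm
  constructor
  · intro i hi
    have h := hrec1 i hi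
    have hmi : (0 : ℝ) < (m : ℝ) - i := by
      have : (i : ℝ) < m := by exact_mod_cast hi
      linarith
    have hD : (0 : ℝ) < r * (i + 1) + (m : ℝ) - i := by nlinarith
    field_simp at h
    have h2 : (((m:ℝ) - i) * (r * (i + 1) + (m : ℝ) - i)) *
        (r * (Φc (i + 1) - Φc i) - (m : ℝ) * (Φc i - Φn i)) = 0 := by
      linear_combination -(r * (i + 1) + (m : ℝ) - i) * h
    have h3 : r * (Φc (i + 1) - Φc i) - (m : ℝ) * (Φc i - Φn i) = 0 := by
      rcases mul_eq_zero.1 h2 with h4 | h4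
      · exact absurd h4 (by positivity)
      · exact h4
    rw [div_mul_eq_mul_div, eq_div_iff (ne_of_gt hr)]
    linarith
  · intro i hi0 hi
    have h := hrec0 i hi0 hi
    have hi' : (0 : ℝ) < (i : ℝ) := by exact_mod_cast hi0
    have hD : (0 : ℝ) < r * i + (m : ℝ) + 1 - i := by
      have : (i : ℝ) ≤ m := by exact_mod_cast hi
      nlinarith
    field_simp at h
    have h2 : ((i : ℝ) * (r * i + (m : ℝ) + 1 - i)) *
        (r * (m : ℝ) * (Φc i - Φn i) - (Φn i - Φn (i - 1))) = 0 := by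
      linear_combination -(r * i + (m : ℝ) + 1 - i) * h
    have h3 : r * (m : ℝ) * (Φc i - Φn i) - (Φn i - Φn (i - 1)) = 0 := by
      rcases mul_eq_zero.1 h2 with h4 | h4
      · exact absurd h4 (by positivity)
      · exact h4
    rw [div_mul_eq_mul_div, eq_div_iff (by positivity : r * (m : ℝ) ≠ 0)]
    linarith
end

section
/- If a sequence (Φ_{i,1}, Φ_{i,0}) for 0 ≤ i ≤ m satisfies Φ_{i+1,1} − Φ_{i,1} = (m/r)(Φ_{i,1} − Φ_{i,0}) and Φ_{i,1} − Φ_{i,0} = (1/(rm))(Φ_{i,0} − Φ_{i−1,0}) with Φ_{0,0} = 0, then Φ_{i,0} = Σ_{j=1}^{i} (1/(rm))^{i−j} (rm/(rm+1))^{i−j+1} Φ_{j,1} for all 1 ≤ i ≤ m. -/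
/-- Closed form for the centre-resident fixation probabilities of the star
graph: if `(Φ_{i,1}, Φ_{i,0})` satisfies the two-term recurrences with
`Φ_{0,0} = 0`, then
`Φ_{i,0} = ∑_{j=1}^{i} (1/(rm))^{i−j} (rm/(rm+1))^{i−j+1} Φ_{j,1}`. -/
theorem star_closed_form
    (m : ℕ) (hm : 1 ≤ m) (r : ℝ) (hr : 0 < r)
    (Φc Φn : ℕ → ℝ) (hΦn0 : Φn 0 = 0)
    (hrec1 : ∀ i, i < m → Φc (i + 1) - Φc i = ((m : ℝ) / r) * (Φc i - Φn i))
    (hrec2 : ∀ i, 0 < i → i ≤ m →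
      Φc i - Φn i = (1 / (r * m)) * (Φn i - Φn (i - 1))) :
    ∀ i, 1 ≤ i → i ≤ m →
      Φn i = ∑ j ∈ Finset.Icc 1 i,
        (1 / (r * m)) ^ (i - j) * ((r * m) / (r * m + 1)) ^ (i - j + 1) * Φc j := by
  have hA : (0:ℝ) < r * m := by
    have : (1:ℝ) ≤ (m:ℝ) := by exact_mod_cast hm
    nlinarith
  have hA0 : (r * (m:ℝ)) ≠ 0 := ne_of_gt hA
  have hA1 : (r * (m:ℝ) + 1) ≠ 0 := by positivity
  intro i
  induction i with
  | zero => intro h; omega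
  | succ n ih =>
    intro _ hle
    have key : Φn (n+1) = (r*m)/(r*m+1) * Φc (n+1) + 1/(r*m+1) * Φn n := by
      have h2 := hrec2 (n+1) (by omega) hle
      simp only [Nat.add_sub_cancel] at h2
      field_simp at h2 ⊢
      nlinarith [h2]
    rcases Nat.eq_zero_or_pos n with h0 | hn
    · subst h0
      simp [key, hΦn0]
    · rw [key, ih hn (by omega), Finset.sum_Icc_succ_top (by omega : 1 ≤ n+1),
        Finset.mul_sum]
      have hterm : ∀ j ∈ Finset.Icc 1 n,
          1/(r*m+1) * ((1 / (r * m)) ^ (n - j) * ((r * m) / (r * m + 1)) ^ (n - j + 1) * Φc j)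
          = (1 / (r * m)) ^ (n + 1 - j) * ((r * m) / (r * m + 1)) ^ (n + 1 - j + 1) * Φc j := by
        intro j hj
        have hjn : j ≤ n := (Finset.mem_Icc.mp hj).2
        have he : n + 1 - j = (n - j) + 1 := by omega
        rw [he, pow_succ, pow_succ]
        have hq : (1 / (r * m)) * (r * m / (r * m + 1)) = 1 / (r * m + 1) := by field_simp
        rw [← hq]
        ring
      rw [Finset.sum_congr rfl hterm]
      simp only [Nat.sub_self, Nat.add_sub_cancel]
      ring
end
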